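/- Let M_1 = (V, I_1), …, M_k = (V, I_k) be k matroids over a common finite ground set V and let (S_1, …, S_k) be a partition of S ⊆ V such that S_i ∈ I_i for all i ∈ [k]. Then there exists a partitionable set S' with |S'| ≥ |S| + 1 if and only if some vertex t_j ∈ T is reachable from s by a directed path in the compressed exchange graph G(S_1, …, S_k). -/

import Mathlib

/-- A matroid on a finite ground set `V`, given by its family of independent sets. -/
structure FinMatroid (V : Type*) [DecidableEq V] [Fintype V] where
  Indep : Finset V → Prop
  indep_empty : Indep ∅
  indep_subset : ∀ ⦃S T : Finset V⦄, Indep S → T ⊆ S → Indep T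
  indep_aug : ∀ ⦃S T : Finset V⦄, Indep S → Indep T → T.card < S.card →
    ∃ x ∈ S \ T, Indep (insert x T)

/-- `S` is partitionable w.r.t. the matroids `M i`: it can be partitioned into
sets `P i` with `P i` independent in `M i`. -/
def Partitionable {V ι : Type*} [DecidableEq V] [Fintype V] [DecidableEq ι] [Fintype ι]
    (M : ι → FinMatroid V) (S : Finset V) : Prop :=
  ∃ P : ι → Finset V, (∀ i, (M i).Indep (P i)) ∧
    (∀ i j, i ≠ j → Disjoint (P i) (P j)) ∧ Finset.univ.biUnion P = S

/-- `reachIn Adj n x y` : there is a directed walk with exactly `n` edges from `x` to `y`. -/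
def reachIn {α : Type*} (Adj : α → α → Prop) : ℕ → α → α → Prop
  | 0, x, y => x = y
  | n + 1, x, y => ∃ z, Adj x z ∧ reachIn Adj n z y

/-- Distance (number of edges of a shortest directed path) from `x` to `y`; `⊤` if none. -/
noncomputable def ddist {α : Type*} (Adj : α → α → Prop) (x y : α) : ℕ∞ :=
  sInf {n : ℕ∞ | ∃ m : ℕ, n = (m : ℕ∞) ∧ reachIn Adj m x y}

/-- Vertices of the compressed exchange graph: ground elements, a source `src`,
and one sink `snk i` for each index `i`. -/
inductive CVert (V ι : Type*) where
  | elt : V → CVert V ι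
  | src : CVert V ι
  | snk : ι → CVert V ι

/-- The compressed exchange graph `G(S₁, …, S_k)` relative to the partition `P`. -/
def compAdj {V ι : Type*} [DecidableEq V] [Fintype V] [DecidableEq ι] [Fintype ι]
    (M : ι → FinMatroid V) (P : ι → Finset V) : CVert V ι → CVert V ι → Prop
  | CVert.elt v, CVert.elt u =>
      ∃ i, u ∈ P i ∧ ¬ (M i).Indep (insert v (P i)) ∧
        (M i).Indep (insert v ((P i).erase u))
  | CVert.src, CVert.elt v => v ∉ Finset.univ.biUnion P
  | CVert.elt v, CVert.snk i => v ∉ P i ∧ (M i).Indep (insert v (P i))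
  | _, _ => False

namespace FinMatroid
variable {V : Type*} [DecidableEq V] [Fintype V] (M : FinMatroid V)

open Classical in
noncomputable def circuitOf (I : Finset V) (x : V) : Finset V :=
  insert x (I.filter fun u => M.Indep (insert x (I.erase u)))

variable {M}

lemma dep_of_subset {A B : Finset V} (h : A ⊆ B) (hA : ¬ M.Indep A) : ¬ M.Indep B :=
  fun hB => hA (M.indep_subset hB h)

lemma exists_maxIndep (X J : Finset V) (hJX : J ⊆ X) (hJ : M.Indep J) :
    ∃ B, J ⊆ B ∧ B ⊆ X ∧ M.Indep B ∧
      ∀ B', J ⊆ B' → B' ⊆ X → M.Indep B' → B'.card ≤ B.card := by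
  classical
  have h : (X.powerset.filter fun B => J ⊆ B ∧ M.Indep B).Nonempty :=
    ⟨J, by simp [hJX, hJ]⟩
  obtain ⟨B, hB, hmax⟩ := Finset.exists_max_image _ Finset.card h
  simp only [Finset.mem_filter, Finset.mem_powerset] at hB
  refine ⟨B, hB.2.1, hB.1, hB.2.2, fun B' h1 h2 h3 => ?_⟩
  exact hmax B' (by simp [Finset.mem_filter, Finset.mem_powerset, h1, h2, h3])

lemma exists_minDep {W : Finset V} (hW : ¬ M.Indep W) :
    ∃ C, C ⊆ W ∧ ¬ M.Indep C ∧ ∀ D ⊂ C, M.Indep D := by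
  classical
  induction W using Finset.strongInduction with
  | _ W ih =>
    by_cases h : ∀ D ⊂ W, M.Indep D
    · exact ⟨W, Finset.Subset.refl W, hW, h⟩
    · push_neg at h
      obtain ⟨D, hDW, hD⟩ := h
      obtain ⟨C, hCD, hC⟩ := ih D hDW hD
      exact ⟨C, hCD.trans hDW.subset, hC⟩

lemma indep_insert_erase_of_mem_minDep
    {I C : Finset V} {x u : V} (hI : M.Indep I) (hx : x ∉ I)
    (hC : C ⊆ insert x I) (hCdep : ¬ M.Indep C) (hmin : ∀ D ⊂ C, M.Indep D)
    (hu : u ∈ C) (hux : u ≠ x) :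
    M.Indep (insert x (I.erase u)) := by
  classical
  have huI : u ∈ I := by
    rcases Finset.mem_insert.1 (hC hu) with h | h
    · exact absurd h hux
    · exact h
  have hJ : M.Indep (C.erase u) := hmin _ (Finset.erase_ssubset hu)
  obtain ⟨B, hJB, hBX, hBind, hBmax⟩ :=
    exists_maxIndep (insert x I) (C.erase u) ((Finset.erase_subset _ _).trans hC) hJ
  have huB : u ∉ B := by
    intro huB
    refine hCdep (M.indep_subset hBind ?_)
    intro c hc
    by_cases hcu : c = u
    · exact hcu ▸ huB
    · exact hJB (Finset.mem_erase.2 ⟨hcu, hc⟩)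
  have hcard : I.card ≤ B.card := by
    by_contra hlt
    push_neg at hlt
    obtain ⟨z, hz, hzind⟩ := M.indep_aug hI hBind hlt
    have hz' := Finset.mem_sdiff.1 hz
    have : (insert z B).card ≤ B.card :=
      hBmax _ (hJB.trans (Finset.subset_insert _ _))
        (Finset.insert_subset (Finset.mem_insert_of_mem hz'.1) hBX) hzind
    rw [Finset.card_insert_of_notMem hz'.2] at this
    omega
  have hBsub : B ⊆ insert x (I.erase u) := by
    intro c hc
    rcases Finset.mem_insert.1 (hBX hc) with h | h
    · exact h ▸ Finset.mem_insert_self _ _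
    · exact Finset.mem_insert_of_mem (Finset.mem_erase.2 ⟨fun hcu => huB (hcu ▸ hc), h⟩)
  have hcard2 : (insert x (I.erase u)).card ≤ B.card := by
    rw [Finset.card_insert_of_notMem (fun hx' => hx (Finset.mem_of_mem_erase hx')),
      Finset.card_erase_of_mem huI]
    have : 1 ≤ I.card := Finset.card_pos.2 ⟨u, huI⟩
    omega
  have : B = insert x (I.erase u) := Finset.eq_of_subset_of_card_le hBsub hcard2
  exact this ▸ hBind

lemma minDep_eq_circuitOf {I C : Finset V} {x : V} (hI : M.Indep I) (hx : x ∉ I)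
    (hC : C ⊆ insert x I) (hCdep : ¬ M.Indep C) (hmin : ∀ D ⊂ C, M.Indep D) :
    C = M.circuitOf I x := by
  classical
  have hxC : x ∈ C := by
    by_contra hxC
    refine hCdep (M.indep_subset hI ?_)
    intro c hc
    rcases Finset.mem_insert.1 (hC hc) with h | h
    · exact absurd (h ▸ hc) hxC
    · exact h
  apply Finset.Subset.antisymm
  · intro u hu
    by_cases hux : u = x
    · exact hux ▸ Finset.mem_insert_self _ _
    · have huI : u ∈ I := by
        rcases Finset.mem_insert.1 (hC hu) with h | h
        · exact absurd h hux
        · exact h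
      refine Finset.mem_insert_of_mem (Finset.mem_filter.2 ⟨huI, ?_⟩)
      simpa using indep_insert_erase_of_mem_minDep hI hx hC hCdep hmin hu hux
  · intro u hu
    rcases Finset.mem_insert.1 hu with h | h
    · exact h ▸ hxC
    · have h' := Finset.mem_filter.1 h
      by_contra huC
      refine hCdep (M.indep_subset h'.2 ?_)
      intro c hc
      rcases Finset.mem_insert.1 (hC hc) with h2 | h2
      · exact h2 ▸ Finset.mem_insert_self _ _
      · exact Finset.mem_insert_of_mem
          (Finset.mem_erase.2 ⟨fun hcu => huC (hcu ▸ hc), h2⟩)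

section circuit
variable {I : Finset V} {x : V} (hI : M.Indep I) (hx : x ∉ I) (hdep : ¬ M.Indep (insert x I))
include hI hx hdep

lemma circuitOf_dep : ¬ M.Indep (M.circuitOf I x) := by
  obtain ⟨C, hC, hCdep, hmin⟩ := exists_minDep hdep
  exact minDep_eq_circuitOf hI hx hC hCdep hmin ▸ hCdep

lemma circuitOf_minimal : ∀ D ⊂ M.circuitOf I x, M.Indep D := by
  obtain ⟨C, hC, hCdep, hmin⟩ := exists_minDep hdep
  exact minDep_eq_circuitOf hI hx hC hCdep hmin ▸ hmin

omit hI hx hdep in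
lemma circuitOf_subset : M.circuitOf I x ⊆ insert x I := by
  classical
  intro u hu
  rcases Finset.mem_insert.1 hu with h | h
  · exact h ▸ Finset.mem_insert_self _ _
  · exact Finset.mem_insert_of_mem (Finset.mem_filter.1 h).1

omit hI hdep in
lemma mem_circuitOf_iff {u : V} (huI : u ∈ I) :
    u ∈ M.circuitOf I x ↔ M.Indep (insert x (I.erase u)) := by
  classical
  rw [circuitOf, Finset.mem_insert, Finset.mem_filter]
  constructor
  · rintro (h | h)
    · exact absurd (h ▸ huI) hx
    · exact h.2
  · intro h
    exact Or.inr ⟨huI, h⟩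

omit hdep in
lemma circuitOf_dep_subset {W : Finset V} (hW : W ⊆ insert x I) (hWdep : ¬ M.Indep W) :
    M.circuitOf I x ⊆ W := by
  obtain ⟨C, hC, hCdep, hmin⟩ := exists_minDep hWdep
  exact (minDep_eq_circuitOf hI hx (hC.trans hW) hCdep hmin) ▸ hC

end circuit

lemma circuitOf_eq_of {I I' : Finset V} {x : V} (hI : M.Indep I) (hx : x ∉ I)
    (hdep : ¬ M.Indep (insert x I)) (hI' : M.Indep I') (hx' : x ∉ I')
    (hsub : M.circuitOf I x ⊆ insert x I') :
    M.circuitOf I' x = M.circuitOf I x :=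
  (minDep_eq_circuitOf hI' hx' hsub (circuitOf_dep hI hx hdep)
    (circuitOf_minimal hI hx hdep)).symm

lemma dep_insert_of_circuit_subset {I I' : Finset V} {x : V} (hI : M.Indep I) (hx : x ∉ I)
    (hdep : ¬ M.Indep (insert x I)) (hsub : M.circuitOf I x ⊆ insert x I') :
    ¬ M.Indep (insert x I') :=
  dep_of_subset hsub (circuitOf_dep hI hx hdep)

theorem serial_exchange :
    ∀ (l : List (V × V)) (I : Finset V), M.Indep I →
      (∀ p ∈ l, p.1 ∉ I ∧ p.2 ∈ I ∧ ¬ M.Indep (insert p.1 I) ∧ p.2 ∈ M.circuitOf I p.1) →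
      (l.map Prod.fst).Nodup → (l.map Prod.snd).Nodup →
      l.Pairwise (fun p q => p.2 ∉ M.circuitOf I q.1) →
      M.Indep ((I \ (l.map Prod.snd).toFinset) ∪ (l.map Prod.fst).toFinset)
  | [], I, hI, _, _, _, _ => by simpa using hI
  | (x, y) :: l, I, hI, hmem, hnx, hny, hpw => by
    classical
    obtain ⟨hx, hy, hdep, hyc⟩ := hmem _ (List.mem_cons_self)
    set I' := insert x (I.erase y) with hI'def
    have hI' : M.Indep I' := (mem_circuitOf_iff hx hy).1 hyc
    rw [List.map_cons, List.nodup_cons] at hnx hny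
    have hxl : x ∉ l.map Prod.fst := hnx.1
    have hyl : y ∉ l.map Prod.snd := hny.1
    have hhead : ∀ q ∈ l, y ∉ M.circuitOf I q.1 := (List.pairwise_cons.1 hpw).1
    have hpwl : l.Pairwise (fun p q => p.2 ∉ M.circuitOf I q.1) := (List.pairwise_cons.1 hpw).2
    have hq1x : ∀ q ∈ l, q.1 ≠ x := by
      intro q hq h
      exact hxl (h ▸ List.mem_map_of_mem (f := Prod.fst) hq)
    have hq2y : ∀ q ∈ l, q.2 ≠ y := by
      intro q hq h
      exact hyl (h ▸ List.mem_map_of_mem (f := Prod.snd) hq)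
    have hq1I' : ∀ q ∈ l, q.1 ∉ I' := by
      intro q hq h
      rcases Finset.mem_insert.1 h with h | h
      · exact hq1x q hq h
      · exact (hmem q (List.mem_cons_of_mem _ hq)).1 (Finset.mem_of_mem_erase h)
    have hcsub : ∀ q ∈ l, M.circuitOf I q.1 ⊆ insert q.1 I' := by
      intro q hq u hu
      rcases Finset.mem_insert.1 (circuitOf_subset hu) with h | h
      · exact h ▸ Finset.mem_insert_self _ _
      · refine Finset.mem_insert_of_mem (Finset.mem_insert_of_mem
          (Finset.mem_erase.2 ⟨fun huy => ?_, h⟩))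
        exact hhead q hq (huy ▸ hu)
    have hceq : ∀ q ∈ l, M.circuitOf I' q.1 = M.circuitOf I q.1 := by
      intro q hq
      exact circuitOf_eq_of hI (hmem q (List.mem_cons_of_mem _ hq)).1
        (hmem q (List.mem_cons_of_mem _ hq)).2.2.1 hI' (hq1I' q hq) (hcsub q hq)
    have hmem' : ∀ q ∈ l, q.1 ∉ I' ∧ q.2 ∈ I' ∧ ¬ M.Indep (insert q.1 I') ∧
        q.2 ∈ M.circuitOf I' q.1 := by
      intro q hq
      obtain ⟨h1, h2, h3, h4⟩ := hmem q (List.mem_cons_of_mem _ hq)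
      refine ⟨hq1I' q hq, Finset.mem_insert_of_mem (Finset.mem_erase.2 ⟨hq2y q hq, h2⟩),
        dep_insert_of_circuit_subset hI h1 h3 (hcsub q hq), ?_⟩
      rw [hceq q hq]; exact h4
    have hpw' : l.Pairwise (fun p q => p.2 ∉ M.circuitOf I' q.1) := by
      refine hpwl.imp_of_mem ?_
      intro p q hp hq h
      rw [hceq q hq]; exact h
    have IH := serial_exchange l I' hI' hmem' hnx.2 hny.2 hpw'
    have hYsub : ∀ a ∈ (l.map Prod.snd).toFinset, a ∈ I := by
      intro a ha
      obtain ⟨q, hq, rfl⟩ := List.mem_map.1 (List.mem_toFinset.1 ha)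
      exact (hmem q (List.mem_cons_of_mem _ hq)).2.1
    have hset : (I' \ (l.map Prod.snd).toFinset) ∪ (l.map Prod.fst).toFinset =
        (I \ (((x, y) :: l).map Prod.snd).toFinset) ∪ (((x, y) :: l).map Prod.fst).toFinset := by
      ext a
      simp only [hI'def, List.map_cons, List.toFinset_cons, Finset.mem_union, Finset.mem_sdiff,
        Finset.mem_insert, Finset.mem_erase]
      by_cases hax : a = x
      · subst hax
        have h1 : a ∉ (l.map Prod.snd).toFinset := fun h => hx (hYsub _ h)
        simp [h1]
      · simp only [hax, false_or]
        tauto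
    exact hset ▸ IH

end FinMatroid

section Forward
variable {V ι : Type*} [DecidableEq V] [Fintype V] [DecidableEq ι] [Fintype ι]
  (M : ι → FinMatroid V) (P : ι → Finset V)

open FinMatroid

theorem reach_of_augment (S : Finset V)
    (hind : ∀ i, (M i).Indep (P i)) (hdisj : ∀ i j, i ≠ j → Disjoint (P i) (P j))
    (hS : Finset.univ.biUnion P = S)
    (h : ∃ S' : Finset V, Partitionable M S' ∧ S.card + 1 ≤ S'.card) :
    ∃ j : ι, Relation.ReflTransGen (compAdj M P) CVert.src (CVert.snk j) := by
  classical
  by_contra hn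
  obtain ⟨S', ⟨Q, hQind, hQdisj, hQU⟩, hcard⟩ := h
  set R : Finset V := Finset.univ.filter
    (fun v => Relation.ReflTransGen (compAdj M P) CVert.src (CVert.elt v)) with hR
  have hmemR : ∀ v : V, v ∈ R ↔
      Relation.ReflTransGen (compAdj M P) CVert.src (CVert.elt v) := by
    intro v; simp [hR]
  have h1 : ∀ v : V, v ∉ S → v ∈ R := by
    intro v hv
    rw [hmemR]
    exact Relation.ReflTransGen.single (by simpa [compAdj, hS] using hv)
  have h2 : ∀ (i : ι) (v : V), v ∈ R → v ∉ P i → ¬ (M i).Indep (insert v (P i)) := by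
    intro i v hvR hvP hI
    exact hn ⟨i, Relation.ReflTransGen.tail ((hmemR v).1 hvR)
      (show compAdj M P (CVert.elt v) (CVert.snk i) from ⟨hvP, hI⟩)⟩
  have h3 : ∀ (i : ι) (v : V), v ∈ R → v ∉ P i → ¬ (M i).Indep (insert v (P i ∩ R)) := by
    intro i v hvR hvP
    have hdep := h2 i v hvR hvP
    refine dep_of_subset ?_ (circuitOf_dep (hind i) hvP hdep)
    intro u hu
    rcases Finset.mem_insert.1 (circuitOf_subset hu) with h | h
    · exact h ▸ Finset.mem_insert_self _ _
    · refine Finset.mem_insert_of_mem (Finset.mem_inter.2 ⟨h, ?_⟩)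
      rw [hmemR]
      refine Relation.ReflTransGen.tail ((hmemR v).1 hvR) ?_
      have hux : u ≠ v := fun huv => hvP (huv ▸ h)
      exact show compAdj M P (CVert.elt v) (CVert.elt u) from
        ⟨i, h, hdep, (mem_circuitOf_iff hvP h).1 hu⟩
  have h4 : ∀ (i : ι) (A : Finset V), A ⊆ R → (M i).Indep A → A.card ≤ (P i ∩ R).card := by
    intro i A hAR hA
    by_contra hlt
    push_neg at hlt
    obtain ⟨x, hx, hxind⟩ := (M i).indep_aug hA
      ((M i).indep_subset (hind i) Finset.inter_subset_left) hlt
    have hx' := Finset.mem_sdiff.1 hx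
    have hxR : x ∈ R := hAR hx'.1
    have hxP : x ∉ P i := fun hxP => hx'.2 (Finset.mem_inter.2 ⟨hxP, hxR⟩)
    exact h3 i x hxR hxP hxind
  -- counting
  have hQR : S' ∩ R = Finset.univ.biUnion (fun i => Q i ∩ R) := by
    rw [← hQU]; ext a; simp [Finset.mem_biUnion]
  have hPR : S ∩ R = Finset.univ.biUnion (fun i => P i ∩ R) := by
    rw [← hS]; ext a; simp [Finset.mem_biUnion]
  have hcard1 : (S' ∩ R).card ≤ (S ∩ R).card := by
    rw [hQR, hPR, Finset.card_biUnion, Finset.card_biUnion]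
    · refine Finset.sum_le_sum fun i _ => ?_
      exact h4 i (Q i ∩ R) Finset.inter_subset_right
        ((M i).indep_subset (hQind i) Finset.inter_subset_left)
    · intro a _ b _ hab
      exact Finset.disjoint_of_subset_left Finset.inter_subset_left
        (Finset.disjoint_of_subset_right Finset.inter_subset_left (hdisj a b hab))
    · intro a _ b _ hab
      exact Finset.disjoint_of_subset_left Finset.inter_subset_left
        (Finset.disjoint_of_subset_right Finset.inter_subset_left (hQdisj a b hab))
  have hcard2 : (S' \ R).card ≤ (S \ R).card := by
    refine Finset.card_le_card fun a ha => ?_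
    have ha' := Finset.mem_sdiff.1 ha
    refine Finset.mem_sdiff.2 ⟨?_, ha'.2⟩
    by_contra haS
    exact ha'.2 (h1 a haS)
  have e1 : (S' ∩ R).card + (S' \ R).card = S'.card := Finset.card_inter_add_card_sdiff S' R
  have e2 : (S ∩ R).card + (S \ R).card = S.card := Finset.card_inter_add_card_sdiff S R
  omega

end Forward

section Backward
variable {V ι : Type*} [DecidableEq V] [Fintype V] [DecidableEq ι] [Fintype ι]
  (M : ι → FinMatroid V) (P : ι → Finset V)

open FinMatroid

def EltAdj : V → V → Prop := fun v u => compAdj M P (CVert.elt v) (CVert.elt u)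

def GoodPath (vs : List V) : Prop :=
  ∃ h : vs ≠ [], List.Chain' (EltAdj M P) vs ∧
    compAdj M P CVert.src (CVert.elt (vs.head h)) ∧
    ∃ j, compAdj M P (CVert.elt (vs.getLast h)) (CVert.snk j)

lemma goodpath_of_reach (h : ∃ j : ι, Relation.ReflTransGen (compAdj M P) CVert.src (CVert.snk j)) :
    ∃ vs, GoodPath M P vs := by
  obtain ⟨j, hj⟩ := h
  have aux : ∀ c, Relation.ReflTransGen (compAdj M P) CVert.src c →
      (c = CVert.src) ∨
      (∃ (vs : List V) (hne : vs ≠ []), List.Chain' (EltAdj M P) vs ∧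
        compAdj M P CVert.src (CVert.elt (vs.head hne)) ∧ c = CVert.elt (vs.getLast hne)) ∨
      (∃ vs, GoodPath M P vs) := by
    intro c hc
    induction hc with
    | refl => exact Or.inl rfl
    | tail h' e ih =>
      rename_i b c
      rcases ih with rfl | ⟨vs, hne, hch, hsrc, rfl⟩ | hgp
      · cases c with
        | elt v =>
          refine Or.inr (Or.inl ⟨[v], by simp, List.isChain_singleton v, ?_, ?_⟩) <;> simpa using e
        | src => simp [compAdj] at e
        | snk j' => simp [compAdj] at e
      · cases c with
        | elt u =>
          refine Or.inr (Or.inl ⟨vs ++ [u], by simp, ?_, ?_, ?_⟩)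
          · refine List.IsChain.append hch (List.isChain_singleton u) ?_
            intro x hx y hy
            rw [List.getLast?_eq_getLast hne] at hx
            simp at hx hy
            rw [← hx, ← hy]
            exact e
          · rwa [List.head_append_of_ne_nil hne]
          · simp
        | src => simp [compAdj] at e
        | snk j' => exact Or.inr (Or.inr ⟨vs, hne, hch, hsrc, j', e⟩)
      · exact Or.inr (Or.inr hgp)
  rcases aux _ hj with h | ⟨vs, hne, _, _, h⟩ | h
  · simp at h
  · simp at h
  · exact h

lemma exists_min_goodpath (hex : ∃ vs, GoodPath M P vs) :
    ∃ vs, GoodPath M P vs ∧ ∀ vs', GoodPath M P vs' → vs.length ≤ vs'.length := by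
  classical
  obtain ⟨vs0, h0⟩ := hex
  have hQ : ∃ n, ∃ vs, GoodPath M P vs ∧ vs.length = n := ⟨vs0.length, vs0, h0, rfl⟩
  obtain ⟨vs, hvs, hlen⟩ := Nat.find_spec hQ
  refine ⟨vs, hvs, fun vs' h' => ?_⟩
  rw [hlen]
  exact Nat.find_min' hQ ⟨vs', h', rfl⟩

lemma goodpath_truncate {vs : List V} (hne : vs ≠ [])
    (hch : List.Chain' (EltAdj M P) vs)
    (hsrc : compAdj M P CVert.src (CVert.elt (vs.head hne)))
    {a : ℕ} (ha : a < vs.length) {j' : ι}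
    (hsnk' : compAdj M P (CVert.elt vs[a]) (CVert.snk j')) :
    GoodPath M P (vs.take (a + 1)) := by
  have hlen : (vs.take (a + 1)).length = a + 1 := by
    rw [List.length_take]; omega
  have hne' : vs.take (a + 1) ≠ [] := by
    intro h; rw [h] at hlen; simp at hlen
  refine ⟨hne', hch.take _, ?_, j', ?_⟩
  · have : (vs.take (a + 1)).head hne' = vs.head hne := by
      rw [List.head_eq_getElem_zero, List.head_eq_getElem_zero]
      exact List.getElem_take
    rwa [this]
  · have : (vs.take (a + 1)).getLast hne' = vs[a] := by
      rw [List.getLast_eq_getElem]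
      simp only [hlen, Nat.add_sub_cancel]
      exact List.getElem_take
    rwa [this]

lemma goodpath_splice {vs : List V} (hne : vs ≠ [])
    (hch : List.Chain' (EltAdj M P) vs)
    (hsrc : compAdj M P CVert.src (CVert.elt (vs.head hne)))
    (hsnk : ∃ j, compAdj M P (CVert.elt (vs.getLast hne)) (CVert.snk j))
    {a b : ℕ} (hab : a + 1 ≤ b) (hb : b < vs.length)
    (hedge : EltAdj M P vs[a] vs[b]) :
    GoodPath M P (vs.take (a + 1) ++ vs.drop b) := by
  have ha : a < vs.length := by omega
  have hlen1 : (vs.take (a + 1)).length = a + 1 := by rw [List.length_take]; omega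
  have hlen2 : (vs.drop b).length = vs.length - b := List.length_drop
  have hne1 : vs.take (a + 1) ≠ [] := by intro h; rw [h] at hlen1; simp at hlen1
  have hne2 : vs.drop b ≠ [] := by
    intro h; rw [h] at hlen2; simp at hlen2; omega
  have hne' : vs.take (a + 1) ++ vs.drop b ≠ [] := by simp [hne1]
  have hgl1 : (vs.take (a + 1)).getLast hne1 = vs[a] := by
    rw [List.getLast_eq_getElem]
    simp only [hlen1, Nat.add_sub_cancel]
    exact List.getElem_take
  refine ⟨hne', ?_, ?_, ?_⟩
  · refine List.IsChain.append (hch.take _) (hch.drop _) ?_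
    intro x hx y hy
    rw [List.getLast?_eq_getLast hne1] at hx
    rw [List.head?_drop] at hy
    rw [List.getElem?_eq_getElem hb] at hy
    simp at hx hy
    rw [← hx, ← hy, hgl1]
    exact hedge
  · have : (vs.take (a + 1) ++ vs.drop b).head hne' = vs.head hne := by
      rw [List.head_eq_getElem_zero, List.head_eq_getElem_zero]
      rw [List.getElem_append_left (by omega)]
      exact List.getElem_take
    rwa [this]
  · have hlen' : (vs.take (a + 1) ++ vs.drop b).length = (a + 1) + (vs.length - b) := by
      rw [List.length_append, hlen1, hlen2]
    have : (vs.take (a + 1) ++ vs.drop b).getLast hne' = vs.getLast hne := by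
      rw [List.getLast_eq_getElem, List.getLast_eq_getElem]
      have h1 : (vs.take (a + 1) ++ vs.drop b).length - 1 = (a + 1) + (vs.length - b - 1) := by
        rw [hlen']; omega
      simp_rw [h1]
      rw [List.getElem_append_right (by rw [hlen1]; omega)]
      simp only [hlen1]
      rw [List.getElem_drop]
      congr 1
      omega
    rwa [this]
theorem augment_of_reach
    (hind : ∀ i, (M i).Indep (P i)) (hdisj : ∀ i j, i ≠ j → Disjoint (P i) (P j))
    (h : ∃ j : ι, Relation.ReflTransGen (compAdj M P) CVert.src (CVert.snk j)) :
    ∃ S' : Finset V, Partitionable M S' ∧ (Finset.univ.biUnion P).card + 1 ≤ S'.card := by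
  classical
  obtain ⟨vs, hgp, hmin⟩ := exists_min_goodpath M P (goodpath_of_reach M P h)
  obtain ⟨hne, hch, hsrc, j, hsnk⟩ := hgp
  set n := vs.length with hn
  have hn1 : 1 ≤ n := by
    rw [hn]
    exact List.length_pos_iff.2 hne
  -- minimality consequences
  have hT : ∀ (a : ℕ) (ha : a + 1 < n) (j' : ι),
      ¬ compAdj M P (CVert.elt (vs[a]'(by omega))) (CVert.snk j') := by
    intro a ha j' he
    have hgp' := goodpath_truncate M P hne hch hsrc (show a < vs.length by omega) he
    have hlen := hmin _ hgp'
    rw [List.length_take] at hlen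
    omega
  have hF : ∀ (a b : ℕ) (hb : b < n) (hab : a + 1 < b),
      ¬ EltAdj M P (vs[a]'(by omega)) (vs[b]'(by omega)) := by
    intro a b hb hab he
    have hgp' := goodpath_splice M P hne hch hsrc ⟨j, hsnk⟩ (show a + 1 ≤ b by omega) hb he
    have hlen := hmin _ hgp'
    rw [List.length_append, List.length_take, List.length_drop] at hlen
    omega
  have hN : vs.Nodup := by
    by_contra hnd
    rw [List.nodup_iff_injective_getElem] at hnd
    rw [Function.not_injective_iff] at hnd
    obtain ⟨⟨a, hal⟩, ⟨b, hbl⟩, heq, hab⟩ := hnd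
    simp only at heq
    -- wlog a < b
    have key : ∀ (a b : ℕ) (hal : a < n) (hbl : b < n), a < b →
        (vs[a]'(by omega)) = (vs[b]'(by omega)) → False := by
      intro a b hal hbl hlt heq
      by_cases hb1 : b + 1 < n
      · have hedge : EltAdj M P (vs[b]'(by omega)) (vs[b+1]'(by omega)) := by
          have := List.isChain_iff_getElem.1 hch b (by omega)
          simpa [List.get_eq_getElem] using this
        rw [← heq] at hedge
        exact hF a (b+1) (by omega) (by omega) hedge
      · -- b = n - 1 : vs[a] is the last element, truncate
        have hbn : b = n - 1 := by omega
        have hlast : vs.getLast hne = vs[b]'(by omega) := by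
          rw [List.getLast_eq_getElem]
          congr 1
          omega
        have hsnk' : compAdj M P (CVert.elt (vs[a]'(by omega))) (CVert.snk j) := by
          rw [heq, ← hlast]
          exact hsnk
        exact hT a (by omega) j hsnk'
    rcases Nat.lt_trichotomy a b with h | h | h
    · exact key a b hal hbl h heq
    · exact hab (by simp [Fin.ext_iff, h])
    · exact key b a hbl hal h heq.symm
  -- w and its facts
  set w : ℕ → V := fun a => vs.getD a (vs.head hne) with hwdef
  have hw : ∀ (a : ℕ) (ha : a < n), w a = vs[a]'(by omega) := by
    intro a ha
    exact List.getD_eq_getElem _ _ (by omega)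
  have hinj : ∀ a b, a < n → b < n → w a = w b → a = b := by
    intro a b ha hb hab
    rw [hw a ha, hw b hb] at hab
    have := List.nodup_iff_injective_getElem.1 hN
      (a₁ := ⟨a, by omega⟩) (a₂ := ⟨b, by omega⟩) (by simpa using hab)
    simpa [Fin.ext_iff] using this
  have hEdge : ∀ a, a + 1 < n → ∃ i, w (a+1) ∈ P i ∧
      ¬ (M i).Indep (insert (w a) (P i)) ∧
      (M i).Indep (insert (w a) ((P i).erase (w (a+1)))) := by
    intro a ha
    have h1 := List.isChain_iff_getElem.1 hch a (by omega)
    have h2 : EltAdj M P (w a) (w (a+1)) := by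
      rw [hw a (by omega), hw (a+1) (by omega)]
      exact h1
    exact h2
  have hFw : ∀ a b, a + 1 < b → b < n →
      ¬ EltAdj M P (w a) (w b) := by
    intro a b hab hb
    rw [hw a (by omega), hw b (by omega)]
    exact hF a b (by omega) hab
  have hw0 : ∀ i, w 0 ∉ P i := by
    have h0 : w 0 ∉ Finset.univ.biUnion P := by
      have : vs.head hne ∉ Finset.univ.biUnion P := hsrc
      rwa [List.head_eq_getElem_zero, ← hw 0 (by omega)] at this
    intro i hi
    exact h0 (Finset.mem_biUnion.2 ⟨i, Finset.mem_univ i, hi⟩)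
  have hlastE : vs.getLast hne = w (n-1) := by
    rw [List.getLast_eq_getElem, hw (n-1) (by omega)]
  have hsnkw : w (n-1) ∉ P j ∧ (M j).Indep (insert (w (n-1)) (P j)) := by
    have : compAdj M P (CVert.elt (w (n-1))) (CVert.snk j) := hlastE ▸ hsnk
    exact this
  have hTw : ∀ (a : ℕ), a + 1 < n → ∀ (j' : ι),
      ¬ compAdj M P (CVert.elt (w a)) (CVert.snk j') := by
    intro a ha j'
    rw [hw a (by omega)]
    exact hT a ha j'
  -- idx
  set idx : ℕ → ι := fun a => if h : ∃ i, w (a+1) ∈ P i ∧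
      ¬ (M i).Indep (insert (w a) (P i)) ∧
      (M i).Indep (insert (w a) ((P i).erase (w (a+1)))) then h.choose else j with hidxdef
  have hidx : ∀ a, a + 1 < n → w (a+1) ∈ P (idx a) ∧
      ¬ (M (idx a)).Indep (insert (w a) (P (idx a))) ∧
      (M (idx a)).Indep (insert (w a) ((P (idx a)).erase (w (a+1)))) := by
    intro a ha
    have h := hEdge a ha
    rw [hidxdef]
    simp only [dif_pos h]
    exact h.choose_spec
  have hxnot : ∀ a i, a + 1 < n → idx a = i → w a ∉ P i := by
    intro a i ha hi hmem
    rcases hidx a ha with ⟨_, h2, _⟩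
    rw [hi] at h2
    exact h2 (by rw [Finset.insert_eq_self.2 hmem]; exact hind i)
  have hyuniq : ∀ b i, b < n → w b ∈ P i → 0 < b ∧ idx (b-1) = i := by
    intro b i hb hmem
    rcases Nat.eq_zero_or_pos b with rfl | hb0
    · exact absurd hmem (hw0 i)
    · refine ⟨hb0, ?_⟩
      have hb' : (b-1) + 1 < n ∨ (b-1)+1 = n := by omega
      have hbe : (b-1) + 1 = b := by omega
      by_contra hne'
      have h1 : w b ∈ P (idx (b-1)) := by
        rcases hidx (b-1) (by omega) with ⟨h1, _, _⟩
        · rwa [hbe] at h1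
      exact (Finset.disjoint_left.1 (hdisj _ _ hne')) h1 hmem
  -- pair lists
  set WL := w (n-1) with hWLdef
  set La : ι → List ℕ := fun i => ((List.range (n-1)).filter (fun a => idx a = i)).reverse
    with hLadef
  have hLa : ∀ i a, a ∈ La i ↔ a + 1 < n ∧ idx a = i := by
    intro i a
    rw [hLadef]
    simp only [List.mem_reverse, List.mem_filter, List.mem_range, decide_eq_true_eq]
    constructor
    · rintro ⟨h1, h2⟩; exact ⟨by omega, h2⟩
    · rintro ⟨h1, h2⟩; exact ⟨by omega, h2⟩
  have hLaN : ∀ i, (La i).Nodup := by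
    intro i
    rw [hLadef]
    simp only [List.nodup_reverse]
    exact List.nodup_range.filter _
  have hLapw : ∀ i, (La i).Pairwise (· > ·) := by
    intro i
    rw [hLadef]
    rw [List.pairwise_reverse]
    exact List.pairwise_lt_range.filter _
  set L : ι → List (V × V) := fun i => (La i).map (fun a => (w a, w (a+1))) with hLdef
  have hPair : ∀ i a, a ∈ La i → w (a+1) ∈ P i ∧
      ¬ (M i).Indep (insert (w a) (P i)) ∧
      (M i).Indep (insert (w a) ((P i).erase (w (a+1)))) ∧ w a ∉ P i := by
    intro i a ha
    obtain ⟨h1, h2⟩ := (hLa i a).1 ha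
    subst h2
    obtain ⟨g1, g2, g3⟩ := hidx a h1
    exact ⟨g1, g2, g3, hxnot a _ h1 rfl⟩
  set I' : ι → Finset V := fun i => if i = j then insert WL (P j) else P i with hI'def
  have hI'supset : ∀ i, P i ⊆ I' i := by
    intro i
    rw [hI'def]
    by_cases hij : i = j
    · subst hij; simp only [if_pos rfl]; exact Finset.subset_insert _ _
    · simp only [if_neg hij]; exact Finset.Subset.refl _
  have hI'ind : ∀ i, (M i).Indep (I' i) := by
    intro i
    rw [hI'def]
    by_cases hij : i = j
    · subst hij; simp only [if_pos rfl]; exact hsnkw.2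
    · simp only [if_neg hij]; exact hind i
  have hI'x : ∀ i a, a ∈ La i → w a ∉ I' i := by
    intro i a ha hmem
    obtain ⟨h1, _⟩ := (hLa i a).1 ha
    have hnp := (hPair i a ha).2.2.2
    simp only [hI'def] at hmem
    by_cases hij : i = j
    · subst hij
      rw [if_pos rfl] at hmem
      rcases Finset.mem_insert.1 hmem with hEq | hmem'
      · have := hinj a (n-1) (by omega) (by omega) hEq
        omega
      · exact hnp hmem'
    · rw [if_neg hij] at hmem
      exact hnp hmem
  have hcircmem : ∀ i a, a ∈ La i → w (a+1) ∈ (M i).circuitOf (P i) (w a) := by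
    intro i a ha
    obtain ⟨g1, g2, g3, g4⟩ := hPair i a ha
    exact (FinMatroid.mem_circuitOf_iff g4 g1).2 g3
  have hcsub : ∀ i a, a ∈ La i → (M i).circuitOf (P i) (w a) ⊆ insert (w a) (I' i) := by
    intro i a ha
    exact FinMatroid.circuitOf_subset.trans (Finset.insert_subset_insert _ (hI'supset i))
  have hceq : ∀ i a, a ∈ La i →
      (M i).circuitOf (I' i) (w a) = (M i).circuitOf (P i) (w a) := by
    intro i a ha
    obtain ⟨g1, g2, g3, g4⟩ := hPair i a ha
    exact FinMatroid.circuitOf_eq_of (hind i) g4 g2 (hI'ind i) (hI'x i a ha) (hcsub i a ha)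
  have hdep' : ∀ i a, a ∈ La i → ¬ (M i).Indep (insert (w a) (I' i)) := by
    intro i a ha
    obtain ⟨g1, g2, g3, g4⟩ := hPair i a ha
    exact FinMatroid.dep_insert_of_circuit_subset (hind i) g4 g2 (hcsub i a ha)
  have hKey : ∀ i, (M i).Indep
      ((I' i \ ((L i).map Prod.snd).toFinset) ∪ ((L i).map Prod.fst).toFinset) := by
    intro i
    refine FinMatroid.serial_exchange (L i) (I' i) (hI'ind i) ?_ ?_ ?_ ?_
    · intro p hp
      rw [hLdef] at hp
      obtain ⟨a, ha, rfl⟩ := List.mem_map.1 hp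
      refine ⟨hI'x i a ha, hI'supset i (hPair i a ha).1, hdep' i a ha, ?_⟩
      rw [hceq i a ha]
      exact hcircmem i a ha
    · have he : (L i).map Prod.fst = (La i).map (fun a => w a) := by
        rw [hLdef, List.map_map]; rfl
      rw [he]
      refine List.Nodup.map_on ?_ (hLaN i)
      intro a ha b hb hab
      obtain ⟨ha1, _⟩ := (hLa i a).1 ha
      obtain ⟨hb1, _⟩ := (hLa i b).1 hb
      exact hinj a b (by omega) (by omega) hab
    · have he : (L i).map Prod.snd = (La i).map (fun a => w (a+1)) := by
        rw [hLdef, List.map_map]; rfl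
      rw [he]
      refine List.Nodup.map_on ?_ (hLaN i)
      intro a ha b hb hab
      obtain ⟨ha1, _⟩ := (hLa i a).1 ha
      obtain ⟨hb1, _⟩ := (hLa i b).1 hb
      have := hinj (a+1) (b+1) (by omega) (by omega) hab
      omega
    · rw [hLdef]
      rw [List.pairwise_map]
      refine (hLapw i).imp_of_mem ?_
      intro a b ha hb hgt hmem
      obtain ⟨ha1, _⟩ := (hLa i a).1 ha
      obtain ⟨hb1, _⟩ := (hLa i b).1 hb
      rw [hceq i b hb] at hmem
      obtain ⟨ga1, ga2, ga3, ga4⟩ := hPair i a ha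
      obtain ⟨gb1, gb2, gb3, gb4⟩ := hPair i b hb
      have hmem' := (FinMatroid.mem_circuitOf_iff gb4 ga1).1 hmem
      exact hFw b (a+1) (by omega) (by omega) ⟨i, ga1, gb2, hmem'⟩
  -- the new partition
  set Ys : ι → Finset V := fun i => ((L i).map Prod.snd).toFinset with hYsdef
  set Xs : ι → Finset V := fun i => ((L i).map Prod.fst).toFinset with hXsdef
  set P'' : ι → Finset V := fun i => (I' i \ Ys i) ∪ Xs i with hP''def
  have hXsmem : ∀ i u, u ∈ Xs i ↔ ∃ a, a ∈ La i ∧ u = w a := by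
    intro i u
    rw [hXsdef]
    simp only [List.mem_toFinset, List.mem_map, hLdef]
    constructor
    · rintro ⟨p, ⟨a, ha, rfl⟩, rfl⟩; exact ⟨a, ha, rfl⟩
    · rintro ⟨a, ha, rfl⟩; exact ⟨(w a, w (a+1)), ⟨a, ha, rfl⟩, rfl⟩
  have hYsmem : ∀ i u, u ∈ Ys i ↔ ∃ a, a ∈ La i ∧ u = w (a+1) := by
    intro i u
    rw [hYsdef]
    simp only [List.mem_toFinset, List.mem_map, hLdef]
    constructor
    · rintro ⟨p, ⟨a, ha, rfl⟩, rfl⟩; exact ⟨a, ha, rfl⟩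
    · rintro ⟨a, ha, rfl⟩; exact ⟨(w a, w (a+1)), ⟨a, ha, rfl⟩, rfl⟩
  have hmemPath : ∀ u, u ∈ vs.toFinset ↔ ∃ b, b < n ∧ u = w b := by
    intro u
    rw [List.mem_toFinset, List.mem_iff_getElem]
    constructor
    · rintro ⟨b, hb, rfl⟩; exact ⟨b, hb, (hw b hb).symm⟩
    · rintro ⟨b, hb, rfl⟩; exact ⟨b, by omega, (hw b hb).symm⟩
  have hP''mem : ∀ i u, u ∈ P'' i ↔
      ((u ∈ P i ∧ u ∉ vs.toFinset) ∨ (∃ a, a ∈ La i ∧ u = w a) ∨ (i = j ∧ u = WL)) := by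
    intro i u
    rw [hP''def]
    simp only [Finset.mem_union, Finset.mem_sdiff]
    constructor
    · rintro (⟨hu1, hu2⟩ | hu)
      · have hcases : u = WL ∧ i = j ∨ u ∈ P i := by
          simp only [hI'def] at hu1
          by_cases hij : i = j
          · subst hij
            rw [if_pos rfl] at hu1
            rcases Finset.mem_insert.1 hu1 with h | h
            · exact Or.inl ⟨h, rfl⟩
            · exact Or.inr h
          · rw [if_neg hij] at hu1
            exact Or.inr hu1
        rcases hcases with ⟨rfl, rfl⟩ | huP
        · exact Or.inr (Or.inr ⟨rfl, rfl⟩)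
        · by_cases hpath : u ∈ vs.toFinset
          · obtain ⟨b, hb, rfl⟩ := (hmemPath u).1 hpath
            obtain ⟨hb0, hbidx⟩ := hyuniq b i hb huP
            exfalso
            refine hu2 ((hYsmem i _).2 ⟨b - 1, (hLa i (b-1)).2 ⟨by omega, hbidx⟩, ?_⟩)
            congr 1
            omega
          · exact Or.inl ⟨huP, hpath⟩
      · exact Or.inr (Or.inl ((hXsmem i u).1 hu))
    · rintro (⟨hu1, hu2⟩ | hu | ⟨rfl, rfl⟩)
      · refine Or.inl ⟨hI'supset i hu1, fun hY => ?_⟩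
        obtain ⟨a, ha, rfl⟩ := (hYsmem i _).1 hY
        obtain ⟨ha1, _⟩ := (hLa i a).1 ha
        exact hu2 ((hmemPath _).2 ⟨a+1, by omega, rfl⟩)
      · exact Or.inr ((hXsmem i u).2 hu)
      · refine Or.inl ⟨?_, fun hY => ?_⟩
        · simp [hI'def]
        · obtain ⟨a, ha, hEq⟩ := (hYsmem _ _).1 hY
          have hmem2 := (hPair _ a ha).1
          rw [← hEq] at hmem2
          exact hsnkw.1 hmem2
  have hBpath : ∀ i a, a ∈ La i → w a ∈ vs.toFinset := by
    intro i a ha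
    obtain ⟨h1, _⟩ := (hLa i a).1 ha
    exact (hmemPath _).2 ⟨a, by omega, rfl⟩
  have hWLpath : WL ∈ vs.toFinset := (hmemPath _).2 ⟨n-1, by omega, rfl⟩
  have hP''disj : ∀ i i', i ≠ i' → Disjoint (P'' i) (P'' i') := by
    intro i i' hii'
    rw [Finset.disjoint_left]
    intro u hu hu'
    rw [hP''mem] at hu hu'
    rcases hu with ⟨h1, h2⟩ | ⟨a, ha, rfl⟩ | ⟨rfl, rfl⟩ <;>
      rcases hu' with ⟨h1', h2'⟩ | ⟨a', ha', hEq⟩ | ⟨hj', hEq⟩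
    · exact (Finset.disjoint_left.1 (hdisj i i' hii')) h1 h1'
    · exact h2 (hEq ▸ hBpath i' a' ha')
    · exact h2 (hEq ▸ hWLpath)
    · exact h2' (hBpath i a ha)
    · obtain ⟨g1, _⟩ := (hLa i a).1 ha
      obtain ⟨g1', gidx'⟩ := (hLa i' a').1 ha'
      have hEq' := hinj a a' (by omega) (by omega) hEq
      subst hEq'
      obtain ⟨_, gidx⟩ := (hLa i a).1 ha
      exact hii' (gidx.symm.trans gidx')
    · obtain ⟨g1, _⟩ := (hLa i a).1 ha
      rw [hWLdef] at hEq
      have := hinj a (n-1) (by omega) (by omega) hEq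
      omega
    · exact h2' hWLpath
    · obtain ⟨g1', _⟩ := (hLa i' a').1 ha'
      rw [hWLdef] at hEq
      have := hinj (n-1) a' (by omega) (by omega) hEq
      omega
    · exact hii' (hj' ▸ rfl)
  have hpathin : ∀ u, u ∈ vs.toFinset → ∃ i, u ∈ P'' i := by
    intro u hu
    obtain ⟨b, hb, rfl⟩ := (hmemPath u).1 hu
    by_cases hbl : b + 1 < n
    · exact ⟨idx b, (hP''mem _ _).2 (Or.inr (Or.inl ⟨b, (hLa _ b).2 ⟨hbl, rfl⟩, rfl⟩))⟩
    · have hbn : b = n - 1 := by omega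
      subst hbn
      exact ⟨j, (hP''mem _ _).2 (Or.inr (Or.inr ⟨rfl, rfl⟩))⟩
  have hU : Finset.univ.biUnion P'' = Finset.univ.biUnion P ∪ vs.toFinset := by
    ext u
    simp only [Finset.mem_biUnion, Finset.mem_union, Finset.mem_univ, true_and]
    constructor
    · rintro ⟨i, hu⟩
      rcases (hP''mem i u).1 hu with ⟨h1, _⟩ | ⟨a, ha, rfl⟩ | ⟨_, rfl⟩
      · exact Or.inl ⟨i, h1⟩
      · exact Or.inr (hBpath i a ha)
      · exact Or.inr hWLpath
    · rintro (⟨i, hu⟩ | hu)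
      · by_cases hpath : u ∈ vs.toFinset
        · obtain ⟨i', hi'⟩ := hpathin u hpath
          exact ⟨i', hi'⟩
        · exact ⟨i, (hP''mem i u).2 (Or.inl ⟨hu, hpath⟩)⟩
      · obtain ⟨i', hi'⟩ := hpathin u hu
        exact ⟨i', hi'⟩
  have hw0' : w 0 ∉ Finset.univ.biUnion P := by
    intro hmem
    obtain ⟨i, _, hi⟩ := Finset.mem_biUnion.1 hmem
    exact hw0 i hi
  refine ⟨Finset.univ.biUnion P ∪ vs.toFinset, ⟨P'', fun i => ?_, hP''disj, hU⟩, ?_⟩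
  · rw [hP''def]
    exact hKey i
  · have hsub : insert (w 0) (Finset.univ.biUnion P) ⊆ Finset.univ.biUnion P ∪ vs.toFinset := by
      refine Finset.insert_subset ?_ Finset.subset_union_left
      exact Finset.mem_union_right _ ((hmemPath _).2 ⟨0, by omega, rfl⟩)
    calc (Finset.univ.biUnion P).card + 1
        = (insert (w 0) (Finset.univ.biUnion P)).card := by
          rw [Finset.card_insert_of_notMem hw0']
      _ ≤ _ := Finset.card_le_card hsub

end Backward

/-- There is a partitionable set larger than `S` iff some sink `t_j` is reachable
from `s` in the compressed exchange graph. -/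
theorem augmentable_iff_reachable {V ι : Type*} [DecidableEq V] [Fintype V]
    [DecidableEq ι] [Fintype ι] (M : ι → FinMatroid V) (P : ι → Finset V) (S : Finset V)
    (hind : ∀ i, (M i).Indep (P i)) (hdisj : ∀ i j, i ≠ j → Disjoint (P i) (P j))
    (hS : Finset.univ.biUnion P = S) :
    (∃ S' : Finset V, Partitionable M S' ∧ S.card + 1 ≤ S'.card) ↔
      (∃ j : ι, Relation.ReflTransGen (compAdj M P) CVert.src (CVert.snk j)) := by
  constructor
  · exact reach_of_augment M P S hind hdisj hS
  · intro h
    obtain ⟨S', hpart, hcard⟩ := augment_of_reach M P hind hdisj h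
    exact ⟨S', hpart, by rwa [hS] at hcard⟩
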